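/- arXiv:0807.4250 — 3 statements merged into one kernel-verified Lean document; each statement's English description precedes it below -/
import Mathlib

section
/- Let X be an operator system with a Banach space predual X_♯ such that X⁺ is weak* closed and the involution on X is weak* continuous. Then the cone X_♯⁺ of normal positive functionals on X is weak* dense in the cone X^♯⁺ of all positive functionals on X (in the σ(X^♯, X) topology). -/
open NormedSpace
open scoped ComplexOrder
open Topology

set_option maxHeartbeats 1000000

noncomputable instance instLCSWeakDualAux {P : Type*} [NormedAddCommGroup P] [NormedSpace ℂ P] :
    LocallyConvexSpace ℝ (WeakDual ℂ P) := WeakBilin.locallyConvexSpace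

noncomputable instance instLCSWeakDualAux' {P : Type*} [NormedAddCommGroup P] [NormedSpace ℂ P] :
    @LocallyConvexSpace ℝ (WeakDual ℂ P) _ _ _ (Module.complexToReal _) _ :=
  WeakBilin.locallyConvexSpace

instance instIsScalarTowerWeakDualAux {P : Type*} [NormedAddCommGroup P] [NormedSpace ℂ P] :
    IsScalarTower ℝ ℂ (WeakDual ℂ P) :=
  inferInstanceAs (IsScalarTower ℝ ℂ (StrongDual ℂ P))

lemma real_smul_nonneg' {A : Type*} [Ring A] [StarRing A] [Algebra ℂ A] [StarModule ℂ A]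
    [PartialOrder A] [StarOrderedRing A] {t : ℝ} (ht : 0 ≤ t) {a : A} (ha : 0 ≤ a) :
    0 ≤ (t : ℂ) • a := by
  rw [StarOrderedRing.nonneg_iff] at ha ⊢
  induction ha using AddSubmonoid.closure_induction with
  | mem x hx =>
    obtain ⟨s, rfl⟩ := hx
    apply AddSubmonoid.subset_closure
    refine ⟨((Real.sqrt t : ℝ) : ℂ) • s, ?_⟩
    show star (((Real.sqrt t : ℝ) : ℂ) • s) * (((Real.sqrt t : ℝ) : ℂ) • s) = (t : ℂ) • (star s * s)
    rw [star_smul, smul_mul_smul_comm, Complex.star_def, Complex.conj_ofReal,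
      ← Complex.ofReal_mul, Real.mul_self_sqrt ht]
  | zero => simpa using AddSubmonoid.zero_mem _
  | add x y _ _ hx hy => simpa [smul_add] using AddSubmonoid.add_mem _ hx hy

theorem weakBilin_dual_eval' {𝕜 E F : Type*} [NontriviallyNormedField 𝕜] [AddCommGroup E]
    [Module 𝕜 E] [AddCommGroup F] [Module 𝕜 F] (B : E →ₗ[𝕜] F →ₗ[𝕜] 𝕜)
    (f : WeakBilin B →L[𝕜] 𝕜) :
    ∃ y : F, ∀ x : WeakBilin B, f x = B x y := by
  have hb := LinearMap.hasBasis_weakBilin B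
  have hmem : f ⁻¹' Metric.ball 0 1 ∈ 𝓝 (0 : WeakBilin B) := by
    have := (map_zero f) ▸ f.continuous.tendsto (0 : WeakBilin B)
    exact this (Metric.ball_mem_nhds 0 one_pos)
  obtain ⟨U, hU, hUsub⟩ := hb.mem_iff.1 hmem
  have hU' : U ∈ B.toSeminormFamily.basisSets := hU
  rw [SeminormFamily.basisSets_iff] at hU'
  obtain ⟨s, r, hr, rfl⟩ := hU'
  have hker : (⨅ i : s, LinearMap.ker (B.flip i.1 : E →ₗ[𝕜] 𝕜)) ≤
      LinearMap.ker (f : WeakBilin B →ₗ[𝕜] 𝕜) := by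
    intro x hx
    simp only [Submodule.mem_iInf, LinearMap.mem_ker] at hx
    have hz : ∀ t : 𝕜, ‖f (t • x)‖ < 1 := by
      intro t
      have hmemball : (t • x) ∈ Seminorm.ball (s.sup (B.toSeminormFamily)) 0 r := by
        rw [Seminorm.mem_ball_zero]
        rcases s.eq_empty_or_nonempty with rfl | hs
        · simpa using hr
        · apply Seminorm.finset_sup_apply_lt hr
          intro i hi
          have h0 : (B x) i = 0 := hx ⟨i, hi⟩
          have : B.toSeminormFamily i (t • x) = ‖t‖ * ‖B x i‖ := by
            simp [LinearMap.toSeminormFamily_apply, map_smul]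
          rw [this, h0, norm_zero, mul_zero]
          exact hr
      have := hUsub hmemball
      exact mem_ball_zero_iff.1 this
    change f x = 0
    by_contra hfx
    have hpos : 0 < ‖f x‖ := by
      simpa [norm_pos_iff] using hfx
    obtain ⟨t, ht⟩ := NormedField.exists_lt_norm 𝕜 (1 / ‖f x‖)
    have h2 := hz t
    have h3 : ‖f (t • x)‖ = ‖t‖ * ‖f x‖ := by
      rw [← norm_smul]; exact congrArg norm (map_smul f t x)
    rw [h3] at h2
    rw [div_lt_iff₀ hpos] at ht
    linarith
  have hspan := mem_span_of_iInf_ker_le_ker (𝕜 := 𝕜) hker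
  have hsub : Set.range (fun i : s => (B.flip i.1 : E →ₗ[𝕜] 𝕜))
      ⊆ (LinearMap.range B.flip : Set (E →ₗ[𝕜] 𝕜)) := by
    rintro _ ⟨i, rfl⟩; exact ⟨i.1, rfl⟩
  have := Submodule.span_le.2 hsub hspan
  obtain ⟨y, hy⟩ := this
  exact ⟨y, fun x => (LinearMap.congr_fun hy x).symm⟩

theorem weakDual_dual_eval' {E : Type*} [NormedAddCommGroup E] [NormedSpace ℂ E]
    (F : WeakDual ℂ E →L[ℂ] ℂ) : ∃ y : E, ∀ x : WeakDual ℂ E, F x = x y := by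
  obtain ⟨y, hy⟩ := weakBilin_dual_eval' (topDualPairing ℂ E) F
  exact ⟨y, fun x => hy x⟩

lemma decomp' {P A : Type*} [NormedAddCommGroup P] [NormedSpace ℂ P]
    [NormedRing A] [StarRing A] [CStarRing A] [NormedAlgebra ℂ A] [StarModule ℂ A]
    [CompleteSpace A] [PartialOrder A] [StarOrderedRing A]
    (j : StrongDual ℂ P →ₗᵢ[ℂ] A) (e : StrongDual ℂ P) (he : j e = 1)
    (x : StrongDual ℂ P) (hx : star (j x) = j x) :
    ∃ x₁ x₂ : StrongDual ℂ P, 0 ≤ j x₁ ∧ 0 ≤ j x₂ ∧ x = x₁ - x₂ := by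
  letI : CStarAlgebra A := ⟨⟩
  have hsa : IsSelfAdjoint (j x) := hx
  have hnorm : ‖j x‖ = ‖x‖ := j.norm_map x
  have heq : ((‖x‖:ℝ):ℂ) • (1:A) = algebraMap ℝ A ‖j x‖ := by
    rw [hnorm, Algebra.algebraMap_eq_smul_one, Complex.coe_smul]
  have h1 : (0:A) ≤ ((‖x‖:ℝ):ℂ) • (1:A) + j x := by
    have := hsa.neg_algebraMap_norm_le_self
    rw [neg_le_iff_add_nonneg] at this
    rw [heq]; rwa [add_comm]
  have h2 : (0:A) ≤ ((‖x‖:ℝ):ℂ) • (1:A) - j x := by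
    have := hsa.le_algebraMap_norm_self
    rw [heq]; rwa [sub_nonneg]
  have hhalf : ((2:ℂ))⁻¹ = (((2:ℝ)⁻¹ : ℝ) : ℂ) := by norm_num
  refine ⟨(2:ℂ)⁻¹ • (((‖x‖:ℝ):ℂ) • e + x), (2:ℂ)⁻¹ • (((‖x‖:ℝ):ℂ) • e - x), ?_, ?_, ?_⟩
  · rw [map_smul, map_add, map_smul, he, hhalf]
    exact real_smul_nonneg' (by norm_num) h1
  · rw [map_smul, map_sub, map_smul, he, hhalf]
    exact real_smul_nonneg' (by norm_num) h2
  · module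

/-- Let `X` be an operator system (realized as the dual of a Banach
space `P` via a unital star-closed linear isometry `j` into a unital C*-algebra `A`)
such that `X⁺` is weak* closed and the involution on `X` is weak* continuous.  Then
the cone `X_♯⁺` of normal positive functionals on `X` (i.e. those induced by elements
of the predual `P`) is weak* dense in the cone `X^♯⁺` of all positive functionals on
`X`, in the topology `σ(X^♯, X)`. -/
theorem operatorSystem_normalPositive_weakStarDense_in_positive
    {P A : Type*} [NormedAddCommGroup P] [NormedSpace ℂ P]
    [NormedRing A] [StarRing A] [CStarRing A] [NormedAlgebra ℂ A] [StarModule ℂ A]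
    [CompleteSpace A] [PartialOrder A] [StarOrderedRing A]
    (j : StrongDual ℂ P →ₗᵢ[ℂ] A)
    (e : StrongDual ℂ P) (he : j e = 1)
    (σ : StrongDual ℂ P → StrongDual ℂ P)
    (hσ : ∀ f, j (σ f) = star (j f))
    (hσcont : Continuous (X := WeakDual ℂ P) (Y := WeakDual ℂ P) σ)
    (hposclosed : IsClosed {φ : WeakDual ℂ P | 0 ≤ j (WeakDual.toStrongDual φ)}) :
    {ρ : WeakDual ℂ (StrongDual ℂ P) | ∀ f : StrongDual ℂ P, 0 ≤ j f → 0 ≤ ρ f}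
      ⊆ closure {ρ : WeakDual ℂ (StrongDual ℂ P) |
          ∃ p : P, (∀ g : StrongDual ℂ P, 0 ≤ j g → 0 ≤ g p) ∧ ∀ f : StrongDual ℂ P, ρ f = f p} := by
  classical
  intro ρ₀ hρ₀
  by_contra hnot
  set S : Set (WeakDual ℂ (StrongDual ℂ P)) := {ρ : WeakDual ℂ (StrongDual ℂ P) |
      ∃ p : P, (∀ g : StrongDual ℂ P, 0 ≤ j g → 0 ≤ g p) ∧ ∀ f : StrongDual ℂ P, ρ f = f p} with hSdef
  have jinj : Function.Injective j := j.injective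
  -- the canonical map P → WeakDual ℂ (StrongDual ℂ P)
  set ι : P → WeakDual ℂ (StrongDual ℂ P) := fun p => (inclusionInDoubleDual ℂ P p : StrongDual ℂ (StrongDual ℂ P))
    with hιdef
  have hιapp : ∀ (p : P) (f : StrongDual ℂ P), (ι p) f = f p := fun p f => rfl
  -- convexity of S
  have hconv : Convex ℝ S := by
    rintro ρ₁ ⟨p₁, hp₁, he₁⟩ ρ₂ ⟨p₂, hp₂, he₂⟩ a b ha hb hab
    refine ⟨(a:ℂ) • p₁ + (b:ℂ) • p₂, ?_, ?_⟩
    · intro g hg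
      rw [map_add, map_smul, map_smul]
      refine add_nonneg ?_ ?_
      · exact smul_nonneg (Complex.zero_le_real.2 ha) (hp₁ g hg)
      · exact smul_nonneg (Complex.zero_le_real.2 hb) (hp₂ g hg)
    · intro f
      have happ : (a • ρ₁ + b • ρ₂) f = a • (ρ₁ f) + b • (ρ₂ f) := rfl
      rw [happ, he₁ f, he₂ f, map_add, map_smul, map_smul]
      simp [Complex.real_smul, smul_eq_mul]
  -- separation of ρ₀ from closure S
  obtain ⟨F, u, hu1, hu2⟩ :=
    RCLike.geometric_hahn_banach_point_closed (𝕜 := ℂ) hconv.closure isClosed_closure hnot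
  obtain ⟨f, hFf⟩ := weakDual_dual_eval' F
  have hzeroS : (0 : WeakDual ℂ (StrongDual ℂ P)) ∈ S :=
    ⟨0, fun g _ => by simp, fun f => by rw [map_zero f]; rfl⟩
  have hu0 : u < 0 := by
    have := hu2 0 (subset_closure hzeroS)
    have h0f : ((0 : WeakDual ℂ (StrongDual ℂ P)) f) = 0 := rfl
    simpa [hFf, h0f] using this
  have hρ₀f : (ρ₀ f).re < u := by
    have := hu1; rwa [hFf] at this
  -- positivity of Re (f p) on the predual positive cone
  have hPf : ∀ p : P, (∀ g : StrongDual ℂ P, 0 ≤ j g → 0 ≤ g p) → 0 ≤ (f p).re := by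
    intro p hp
    by_contra hcon
    push_neg at hcon
    have hscale : ∀ t : ℝ, 0 ≤ t → u < t * (f p).re := by
      intro t htnn
      have hmem : ι ((t:ℂ) • p) ∈ S := by
        refine ⟨(t:ℂ) • p, fun g hg => ?_, fun f => hιapp _ f⟩
        rw [map_smul]
        exact smul_nonneg (Complex.zero_le_real.2 htnn) (hp g hg)
      have := hu2 _ (subset_closure hmem)
      rw [hFf, hιapp, map_smul] at this
      simpa [Complex.real_smul, Complex.re_ofReal_mul, smul_eq_mul] using this
    have ht : 0 ≤ (u - 1) / (f p).re := div_nonneg_of_nonpos (by linarith) hcon.le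
    have h1 := hscale _ ht
    rw [div_mul_cancel₀ _ (ne_of_lt hcon)] at h1
    linarith
  -- σ algebra
  have hσfix : ∀ g : StrongDual ℂ P, 0 ≤ j g → σ g = g := by
    intro g hg
    exact jinj (by rw [hσ]; exact IsSelfAdjoint.of_nonneg hg)
  have hσadd : ∀ x y : StrongDual ℂ P, σ (x + y) = σ x + σ y := by
    intro x y
    apply jinj
    rw [hσ, map_add, star_add, map_add, hσ, hσ]
  have hσsmul : ∀ (c : ℂ) (x : StrongDual ℂ P), σ (c • x) = (starRingEnd ℂ c) • σ x := by
    intro c x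
    apply jinj
    rw [hσ, map_smul, star_smul, map_smul, hσ]
    rfl
  -- real and imaginary parts
  obtain ⟨h, hhdef⟩ : ∃ x : StrongDual ℂ P, x = (2:ℂ)⁻¹ • (f + σ f) := ⟨_, rfl⟩
  obtain ⟨m, hmdef⟩ : ∃ x : StrongDual ℂ P, x = (2:ℂ)⁻¹ • (f - σ f) := ⟨_, rfl⟩
  obtain ⟨k, hkdef⟩ : ∃ x : StrongDual ℂ P, x = (-Complex.I) • m := ⟨_, rfl⟩
  have hstar2 : star ((2:ℂ)⁻¹) = (2:ℂ)⁻¹ := by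
    rw [Complex.star_def, map_inv₀, Complex.conj_ofNat]
  have hjh : star (j h) = j h := by
    rw [hhdef, map_smul, map_add, hσ, star_smul, hstar2, star_add, star_star, add_comm]
  have hjm : star (j m) = - j m := by
    rw [hmdef, map_smul, map_sub, hσ, star_smul, hstar2, star_sub, star_star, ← smul_neg,
      neg_sub]
  have hjk : star (j k) = j k := by
    rw [hkdef, map_smul, star_smul, hjm]
    simp [Complex.conj_I]
  have hσh : σ h = h := jinj (by rw [hσ, hjh])
  have hfhk : f = h + Complex.I • k := by
    have hIk : Complex.I • k = m := by
      rw [hkdef, smul_smul, mul_neg, Complex.I_mul_I, neg_neg, one_smul]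
    rw [hIk, hhdef, hmdef]
    module
  -- positive functionals are real on h and their real part on f is that on h
  have key : ∀ ρ : WeakDual ℂ (StrongDual ℂ P), (∀ g : StrongDual ℂ P, 0 ≤ j g → 0 ≤ ρ g) →
      (ρ h).im = 0 ∧ (ρ f).re = (ρ h).re := by
    intro ρ hρ
    have imzero : ∀ x : StrongDual ℂ P, star (j x) = j x → (ρ x).im = 0 := by
      intro x hx
      obtain ⟨x₁, x₂, hx₁, hx₂, rfl⟩ := decomp' j e he x hx
      have i1 : (ρ x₁).im = 0 := ((Complex.le_def.1 (hρ x₁ hx₁)).2).symm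
      have i2 : (ρ x₂).im = 0 := ((Complex.le_def.1 (hρ x₂ hx₂)).2).symm
      rw [map_sub]
      simp [Complex.sub_im, i1, i2]
    have imh := imzero h hjh
    have imk := imzero k hjk
    refine ⟨imh, ?_⟩
    have : ρ f = ρ h + Complex.I * ρ k := by
      rw [hfhk, map_add, map_smul, smul_eq_mul]
    rw [this]
    simp [Complex.add_re, Complex.mul_re, Complex.I_re, Complex.I_im, imk]
  -- h is nonnegative at every point of the predual positive cone
  have hhP : ∀ p : P, (∀ g : StrongDual ℂ P, 0 ≤ j g → 0 ≤ g p) → 0 ≤ h p := by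
    intro p hp
    have hpos : ∀ g : StrongDual ℂ P, 0 ≤ j g → 0 ≤ (ι p) g := fun g hg => by
      rw [hιapp]; exact hp g hg
    obtain ⟨him, hre⟩ := key (ι p) hpos
    rw [hιapp] at him hre
    have hrep : 0 ≤ (h p).re := by
      have := hPf p hp
      rwa [hre] at this
    rw [Complex.le_def]
    constructor
    · simpa using hrep
    · simpa using him.symm
  -- h is a positive element of the dual
  have hposh : 0 ≤ j h := by
    by_contra hcon
    have hconvW : Convex ℝ {φ : WeakDual ℂ P | 0 ≤ j (WeakDual.toStrongDual φ)} := by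
      rintro g₁ hg₁ g₂ hg₂ a b ha hb hab
      have h₁ : 0 ≤ j (WeakDual.toStrongDual g₁) := hg₁
      have h₂ : 0 ≤ j (WeakDual.toStrongDual g₂) := hg₂
      show 0 ≤ j (WeakDual.toStrongDual (a • g₁ + b • g₂))
      have : WeakDual.toStrongDual (a • g₁ + b • g₂)
          = (a:ℂ) • WeakDual.toStrongDual g₁ + (b:ℂ) • WeakDual.toStrongDual g₂ := by
        rw [← algebraMap_smul ℂ a g₁, ← algebraMap_smul ℂ b g₂, map_add, map_smul, map_smul]
        rfl
      rw [this, map_add, map_smul, map_smul]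
      exact add_nonneg (real_smul_nonneg' ha h₁) (real_smul_nonneg' hb h₂)
    have hnotmem : (StrongDual.toWeakDual h) ∉
        {φ : WeakDual ℂ P | 0 ≤ j (WeakDual.toStrongDual φ)} := by
      intro hmem
      exact hcon hmem
    obtain ⟨G, u', hG1, hG2⟩ :=
      RCLike.geometric_hahn_banach_point_closed (𝕜 := ℂ) hconvW hposclosed hnotmem
    obtain ⟨p₀, hGp₀⟩ := weakDual_dual_eval' G
    have hu'0 : u' < 0 := by
      have h0mem : (0 : WeakDual ℂ P) ∈ {φ : WeakDual ℂ P | 0 ≤ j (WeakDual.toStrongDual φ)} := by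
        show (0:A) ≤ j (WeakDual.toStrongDual 0)
        simp
      have := hG2 0 h0mem
      have h0p : ((0 : WeakDual ℂ P) p₀) = 0 := rfl
      simpa [hGp₀, h0p] using this
    -- every positive g has nonnegative Re (g p₀)
    have hg0 : ∀ g : StrongDual ℂ P, 0 ≤ j g → 0 ≤ (g p₀).re := by
      intro g hg
      by_contra hcon2
      push_neg at hcon2
      have hscale : ∀ t : ℝ, 0 ≤ t → u' < t * (g p₀).re := by
        intro t htnn
        have hmem : (StrongDual.toWeakDual ((t:ℂ) • g)) ∈
            {φ : WeakDual ℂ P | 0 ≤ j (WeakDual.toStrongDual φ)} := by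
          have : (0:A) ≤ j ((t:ℂ) • g) := by
            rw [map_smul]
            exact real_smul_nonneg' htnn hg
          exact this
        have := hG2 _ hmem
        rw [hGp₀] at this
        have happ : (StrongDual.toWeakDual ((t:ℂ) • g)) p₀ = (t:ℂ) * g p₀ := rfl
        rw [happ] at this
        simpa [Complex.re_ofReal_mul] using this
      have ht : 0 ≤ (u' - 1) / (g p₀).re := by
        apply div_nonneg_of_nonpos _ hcon2.le
        linarith only [hu'0]
      have h1 := hscale _ ht
      rw [div_mul_cancel₀ _ (ne_of_lt hcon2)] at h1
      linarith only [h1]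
    have hhp₀ : (h p₀).re < u' := by
      have := hG1
      rw [hGp₀] at this
      exact this
    -- symmetrize to get an element of the positive predual cone
    have hL : ∃ q : P, ∀ g : StrongDual ℂ P,
        g q = (2:ℂ)⁻¹ * (g p₀ + (starRingEnd ℂ) ((σ g) p₀)) := by
      let L : StrongDual ℂ P →ₗ[ℂ] ℂ :=
        { toFun := fun g => (2:ℂ)⁻¹ * (g p₀ + (starRingEnd ℂ) ((σ g) p₀))
          map_add' := by
            intro x y
            show (2:ℂ)⁻¹ * ((x + y) p₀ + (starRingEnd ℂ) ((σ (x + y)) p₀))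
              = (2:ℂ)⁻¹ * (x p₀ + (starRingEnd ℂ) ((σ x) p₀))
                + (2:ℂ)⁻¹ * (y p₀ + (starRingEnd ℂ) ((σ y) p₀))
            rw [hσadd]
            simp only [ContinuousLinearMap.add_apply, map_add]
            ring
          map_smul' := by
            intro c x
            show (2:ℂ)⁻¹ * ((c • x) p₀ + (starRingEnd ℂ) ((σ (c • x)) p₀))
              = c * ((2:ℂ)⁻¹ * (x p₀ + (starRingEnd ℂ) ((σ x) p₀)))
            rw [hσsmul]
            simp only [ContinuousLinearMap.smul_apply, smul_eq_mul, map_mul,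
              Complex.conj_conj]
            ring }
      have hcont : Continuous fun φ : WeakDual ℂ P =>
          (2:ℂ)⁻¹ * (φ p₀ + (starRingEnd ℂ) ((σ φ) p₀)) := by
        have c1 : Continuous fun φ : WeakDual ℂ P => φ p₀ := WeakDual.eval_continuous p₀
        have c2 : Continuous fun φ : WeakDual ℂ P => (σ φ) p₀ :=
          (WeakDual.eval_continuous p₀).comp hσcont
        exact continuous_const.mul (c1.add c2.star)
      let G' : WeakDual ℂ P →L[ℂ] ℂ := { toLinearMap := L, cont := hcont }
      obtain ⟨q, hq⟩ := weakDual_dual_eval' G'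
      exact ⟨q, fun g => (hq g).symm⟩
    obtain ⟨q, hq⟩ := hL
    have hqpos : ∀ g : StrongDual ℂ P, 0 ≤ j g → 0 ≤ g q := by
      intro g hg
      rw [hq g, hσfix g hg, Complex.add_conj]
      have : (2:ℂ)⁻¹ * ((2 * (g p₀).re : ℝ) : ℂ) = (((g p₀).re : ℝ) : ℂ) := by
        push_cast; ring
      rw [this]
      exact Complex.zero_le_real.2 (hg0 g hg)
    have hhq : 0 ≤ h q := hhP q hqpos
    have : h q = (((h p₀).re : ℝ) : ℂ) := by
      rw [hq h, hσh, Complex.add_conj]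
      push_cast; ring
    rw [this] at hhq
    have : 0 ≤ (h p₀).re := Complex.zero_le_real.1 hhq
    linarith only [this, hhp₀, hu'0]
  -- conclusion
  obtain ⟨_, hre₀⟩ := key ρ₀ hρ₀
  have : 0 ≤ (ρ₀ h).re := (Complex.le_def.1 (hρ₀ h hposh)).1
  rw [hre₀] at hρ₀f
  linarith
end

section
/- Let X be a unital operator space (a subspace of a unital C*-algebra containing the identity) and x ∈ X with ‖x‖ ≤ 1. Then x is dissipative (i.e., Re ρ(x) ≤ 0 for every state ρ of the containing C*-algebra, equivalently the numerical range of x lies in the closed left half-plane) if and only if ‖1 + t·x‖² ≤ 1 + t² for all t ∈ [0,1]. -/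
open Complex
open scoped ENNReal NNReal Pointwise

section Aux
variable {A : Type*} [NormedRing A] [StarRing A] [CStarRing A] [NormedAlgebra ℂ A]
    [StarModule ℂ A] [CompleteSpace A]

/-- A unital norm-one functional is real on selfadjoint elements. -/
lemma state_im_eq_zero [Nontrivial A] (ρ : A →L[ℂ] ℂ) (h1 : ρ 1 = 1) (hn : ‖ρ‖ = 1)
    {b : A} (hb : IsSelfAdjoint b) : (ρ b).im = 0 := by
  have key : ∀ s : ℝ, (ρ b).re ^ 2 + ((ρ b).im + s) ^ 2 ≤ ‖b‖ ^ 2 + s ^ 2 := by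
    intro s
    set c : ℂ := (s : ℂ) * Complex.I with hc
    set u : A := algebraMap ℂ A c with hu
    have hstar : star (b + u) = b + (-u) := by
      rw [star_add, hb.star_eq, hu, ← map_neg]
      congr 1
      rw [← algebraMap_star_comm]
      congr 1
      simp [hc, Complex.conj_ofReal]
    have hmul : star (b + u) * (b + u) = b * b + algebraMap ℂ A ((s : ℂ) ^ 2) := by
      rw [hstar]
      have hcomm : u * b = b * u := (Algebra.commutes c b)
      have h1' : (b + -u) * (b + u) = b * b + b * u - u * b - u * u := by noncomm_ring
      have h2' : u * u = algebraMap ℂ A (c * c) := by rw [map_mul]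
      have h3' : c * c = -((s : ℂ) ^ 2) := by
        rw [hc]; ring_nf; simp [Complex.I_sq]
      rw [h1', hcomm, h2', h3', map_neg]
      abel
    have hnorm : ‖b + u‖ ^ 2 ≤ ‖b‖ ^ 2 + s ^ 2 := by
      have := CStarRing.norm_star_mul_self (x := b + u)
      rw [hmul] at this
      have hle : ‖b * b + algebraMap ℂ A ((s : ℂ) ^ 2)‖ ≤ ‖b‖ ^ 2 + s ^ 2 := by
        refine (norm_add_le _ _).trans ?_
        gcongr
        · calc ‖b * b‖ ≤ ‖b‖ * ‖b‖ := norm_mul_le b b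
            _ = ‖b‖ ^ 2 := (sq ‖b‖).symm
        · rw [norm_algebraMap']
          norm_cast
          simp [_root_.abs_of_nonneg (sq_nonneg s)]
      calc ‖b + u‖ ^ 2 = ‖b + u‖ * ‖b + u‖ := sq ‖b + u‖
        _ = ‖b * b + algebraMap ℂ A ((s : ℂ) ^ 2)‖ := this.symm
        _ ≤ ‖b‖ ^ 2 + s ^ 2 := hle
    have hρ : ρ (b + u) = ρ b + c := by
      rw [map_add, hu, Algebra.algebraMap_eq_smul_one, map_smul, h1, smul_eq_mul, mul_one]
    have habs : ‖ρ (b + u)‖ ^ 2 ≤ ‖b + u‖ ^ 2 := by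
      have h := ρ.le_opNorm (b + u)
      rw [hn, one_mul] at h
      exact pow_le_pow_left₀ (norm_nonneg _) h 2
    have hresq : ‖ρ b + c‖ ^ 2 = (ρ b).re ^ 2 + ((ρ b).im + s) ^ 2 := by
      rw [Complex.sq_norm, Complex.normSq_apply]
      simp [hc]
      ring
    rw [hρ, hresq] at habs
    exact habs.trans hnorm
  by_contra hv
  set v := (ρ b).im with hvdef
  have hv' : v ≠ 0 := hv
  set s₀ : ℝ := (‖b‖ ^ 2 + 1) / (2 * v) with hs₀
  have h2vs : 2 * v * s₀ = ‖b‖ ^ 2 + 1 := by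
    rw [hs₀]; field_simp
  have := key s₀
  nlinarith [sq_nonneg (ρ b).re, sq_nonneg v]

/-- Every spectral value of a selfadjoint element is attained by a unital norm-one functional. -/
lemma exists_state_of_mem_spectrum [Nontrivial A] (a : A) (ha : IsSelfAdjoint a)
    {z : ℂ} (hz : z ∈ spectrum ℂ a) :
    ∃ ρ : A →L[ℂ] ℂ, ρ 1 = 1 ∧ ‖ρ‖ = 1 ∧ ρ a = z := by
  letI : CStarAlgebra A :=
    { ‹NormedRing A›, ‹StarRing A›, ‹CStarRing A›, ‹NormedAlgebra ℂ A›, ‹StarModule ℂ A›,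
      ‹CompleteSpace A› with }
  haveI := ha.isStarNormal
  set B := StarAlgebra.elemental ℂ a with hB
  obtain ⟨φ, hφ⟩ := (StarAlgebra.elemental.bijective_characterSpaceToSpectrum a).2 ⟨z, hz⟩
  have hφa : φ ⟨a, StarAlgebra.elemental.self_mem ℂ a⟩ = z := congrArg Subtype.val hφ
  -- the character as a continuous linear map, with norm at most one
  set ψ : B →L[ℂ] ℂ := WeakDual.CharacterSpace.toCLM φ with hψ
  have hψ1 : ψ 1 = 1 := map_one φ
  have hψnorm : ‖ψ‖ ≤ 1 := by
    have h := WeakDual.CharacterSpace.norm_le_norm_one φ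
    rwa [CStarRing.norm_one] at h
  -- the submodule underlying B
  set p : Submodule ℂ A := Subalgebra.toSubmodule B.toSubalgebra with hp
  have hmem : ∀ y : A, y ∈ p ↔ y ∈ B := fun y => Iff.rfl
  -- the inclusion of p into B as a linear map
  set j : p →ₗ[ℂ] B :=
    { toFun := fun y => ⟨y.1, y.2⟩
      map_add' := fun y₁ y₂ => rfl
      map_smul' := fun c y => rfl } with hj
  have hjnorm : ∀ y : p, ‖j y‖ = ‖y‖ := fun y => rfl
  set f : p →L[ℂ] ℂ := LinearMap.mkContinuous (ψ.toLinearMap ∘ₗ j) 1 (fun y => by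
    calc ‖ψ (j y)‖ ≤ ‖ψ‖ * ‖j y‖ := ψ.le_opNorm _
      _ ≤ 1 * ‖y‖ := by rw [hjnorm]; exact mul_le_mul_of_nonneg_right hψnorm (norm_nonneg _)) with hf
  have hfval : ∀ y : p, f y = ψ (j y) := fun y => rfl
  have h1p : (1 : A) ∈ p := one_mem B
  have hap : a ∈ p := StarAlgebra.elemental.self_mem ℂ a
  have hf1 : f ⟨1, h1p⟩ = 1 := by
    rw [hfval]
    have : j ⟨1, h1p⟩ = 1 := rfl
    rw [this, hψ1]
  have hfnorm : ‖f‖ = 1 := by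
    refine le_antisymm (LinearMap.mkContinuous_norm_le _ zero_le_one _) ?_
    have h1n : ‖(⟨1, h1p⟩ : p)‖ = 1 := CStarRing.norm_one
    have := f.le_opNorm ⟨1, h1p⟩
    rw [hf1, h1n, mul_one] at this
    simpa using this
  obtain ⟨ρ, hext, hρn⟩ := exists_extension_norm_eq p f
  refine ⟨ρ, ?_, ?_, ?_⟩
  · rw [show (1 : A) = ((⟨1, h1p⟩ : p) : A) from rfl, hext, hf1]
  · rw [hρn, hfnorm]
  · rw [show a = ((⟨a, hap⟩ : p) : A) from rfl, hext, hfval]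
    exact hφa

end Aux

/-- Let `X` be a unital operator space (a closed subspace of a unital
C*-algebra `A` containing the identity) and `x ∈ X` with `‖x‖ ≤ 1`.  Then `x` is
dissipative (i.e. `Re ρ(x) ≤ 0` for every state `ρ` of `A`, equivalently the
numerical range of `x` lies in the closed left half-plane) if and only if
`‖1 + t·x‖² ≤ 1 + t²` for all `t ∈ [0,1]`. -/
theorem dissipative_iff_norm_sq_le
    {A : Type*} [NormedRing A] [StarRing A] [CStarRing A] [NormedAlgebra ℂ A]
    [StarModule ℂ A] [CompleteSpace A]
    (X : Submodule ℂ A) (hX1 : (1 : A) ∈ X) (hXc : IsClosed (X : Set A))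
    (x : A) (hx : x ∈ X) (hxnorm : ‖x‖ ≤ 1) :
    (∀ ρ : A →L[ℂ] ℂ, ρ 1 = 1 → ‖ρ‖ = 1 → (ρ x).re ≤ 0) ↔
      ∀ t : ℝ, t ∈ Set.Icc (0 : ℝ) 1 → ‖1 + (t : ℂ) • x‖ ^ 2 ≤ 1 + t ^ 2 := by
  constructor
  · intro H t ht
    rcases subsingleton_or_nontrivial A with hA | hA
    · have : (1 + (t : ℂ) • x : A) = 0 := Subsingleton.elim _ _
      rw [this, norm_zero]
      nlinarith [sq_nonneg t]
    · -- the selfadjoint real part (doubled)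
      set a : A := x + star x with ha_def
      have ha : IsSelfAdjoint a := by
        rw [IsSelfAdjoint, ha_def, star_add, star_star, add_comm]
      have hanorm : ‖a‖ ≤ 2 := by
        calc ‖a‖ ≤ ‖x‖ + ‖star x‖ := norm_add_le _ _
          _ = ‖x‖ + ‖x‖ := by rw [norm_star]
          _ ≤ 2 := by linarith
      -- the spectrum of a lies in the closed left half plane
      have hspec : ∀ z ∈ spectrum ℂ a, z.re ≤ 0 := by
        intro z hz
        obtain ⟨ρ, h1, hn, hρa⟩ := exists_state_of_mem_spectrum a ha hz
        have hre := H ρ h1 hn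
        set c : A := Complex.I • (x - star x) with hc_def
        have hc : IsSelfAdjoint c := by
          rw [IsSelfAdjoint, hc_def, star_smul, star_sub, star_star]
          simp only [RCLike.star_def, Complex.conj_I, neg_smul, smul_sub]
          module
        have himc : (ρ c).im = 0 := state_im_eq_zero ρ h1 hn hc
        have hxeq : (2 : ℂ) • x = a - Complex.I • c := by
          rw [ha_def, hc_def, smul_smul, Complex.I_mul_I]
          module
        have hsum : (2 : ℂ) * ρ x = ρ a - Complex.I * ρ c := by
          have := congrArg ρ hxeq
          rwa [map_smul, map_sub, map_smul, smul_eq_mul, smul_eq_mul] at this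
        have : 2 * (ρ x).re = (ρ a).re + (ρ c).im := by
          have := congrArg Complex.re hsum
          simpa [Complex.mul_re] using this
        rw [himc, add_zero, hρa] at this
        linarith
      -- hence ‖1 + t • a‖ ≤ 1
      letI : CStarAlgebra A :=
        { ‹NormedRing A›, ‹StarRing A›, ‹CStarRing A›, ‹NormedAlgebra ℂ A›, ‹StarModule ℂ A›,
          ‹CompleteSpace A› with }
      have hy : IsSelfAdjoint ((1 : A) + (t : ℂ) • a) := by
        rw [IsSelfAdjoint, star_add, star_one, star_smul, ha.star_eq]
        norm_num
      have hynorm : ‖(1 : A) + (t : ℂ) • a‖ ≤ 1 := by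
        rcases eq_or_lt_of_le ht.1 with ht0 | ht0
        · simp [← ht0, CStarRing.norm_one]
        · have hspec' : ∀ z ∈ spectrum ℂ ((1 : A) + (t : ℂ) • a), ‖z‖ ≤ 1 := by
            intro z hz
            have hsmul : spectrum ℂ ((t : ℂ) • a) = (t : ℂ) • spectrum ℂ a :=
              spectrum.smul_eq_smul _ _ (spectrum.nonempty a)
            have hadd : spectrum ℂ ((1 : A) + (t : ℂ) • a) = {(1 : ℂ)} + spectrum ℂ ((t : ℂ) • a) := by
              rw [show (1 : A) + (t : ℂ) • a = algebraMap ℂ A 1 + (t : ℂ) • a by rw [map_one],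
                ← spectrum.singleton_add_eq]
            rw [hadd, hsmul] at hz
            obtain ⟨u, hu, v, hv, huv⟩ := Set.mem_add.mp hz
            obtain ⟨w, hw, rfl⟩ := hv
            rw [Set.mem_singleton_iff] at hu
            subst hu
            have hwre : w = (w.re : ℂ) := ha.mem_spectrum_eq_re hw
            have hwle : w.re ≤ 0 := hspec w hw
            have hwabs : ‖w‖ ≤ 2 := (spectrum.norm_le_norm_of_mem hw).trans hanorm
            have hwre_abs : |w.re| ≤ 2 := (Complex.abs_re_le_norm w).trans hwabs
            have hz' : z = ((1 + t * w.re : ℝ) : ℂ) := by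
              rw [← huv, hwre]
              push_cast [smul_eq_mul]
              rw [Complex.ofReal_re]
            rw [hz', Complex.norm_real, Real.norm_eq_abs, abs_le]
            have hge : (0:ℝ) ≤ t * (w.re + 2) :=
              mul_nonneg ht0.le (by linarith [(abs_le.mp hwre_abs).1])
            have hle0 : (0:ℝ) ≤ t * (-w.re) := mul_nonneg ht0.le (neg_nonneg.2 hwle)
            constructor
            · nlinarith [ht.2]
            · nlinarith
          rw [← hy.toReal_spectralRadius_complex_eq_norm]
          have hr : spectralRadius ℂ ((1 : A) + (t : ℂ) • a) ≤ 1 := by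
            rw [spectralRadius]
            refine iSup₂_le fun z hz => ?_
            have := hspec' z hz
            simpa [← ENNReal.coe_one, ENNReal.coe_le_coe, ← NNReal.coe_le_coe] using this
          calc (spectralRadius ℂ ((1 : A) + (t : ℂ) • a)).toReal
              ≤ (1 : ℝ≥0∞).toReal := ENNReal.toReal_mono ENNReal.one_ne_top hr
            _ = 1 := ENNReal.toReal_one
      -- C*-identity computation
      have hCstar : ‖(1 : A) + (t : ℂ) • x‖ ^ 2
          = ‖star ((1 : A) + (t : ℂ) • x) * ((1 : A) + (t : ℂ) • x)‖ := by
        rw [CStarRing.norm_star_mul_self, sq]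
      have hexp : star ((1 : A) + (t : ℂ) • x) * ((1 : A) + (t : ℂ) • x)
          = ((1 : A) + (t : ℂ) • a) + ((t : ℂ) ^ 2) • (star x * x) := by
        have hstar : star ((1 : A) + (t : ℂ) • x) = 1 + (t : ℂ) • star x := by
          rw [star_add, star_one, star_smul,
            show star (t : ℂ) = (t : ℂ) from Complex.conj_ofReal t]
        rw [hstar, ha_def, sq]
        simp only [add_mul, mul_add, one_mul, mul_one, smul_mul_smul_comm, smul_add,
          mul_smul_comm, smul_mul_assoc]
        module
      have hfinal : ‖((1 : A) + (t : ℂ) • a) + ((t : ℂ) ^ 2) • (star x * x)‖ ≤ 1 + t ^ 2 := by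
        refine (norm_add_le _ _).trans ?_
        have h2 : ‖((t : ℂ) ^ 2) • (star x * x)‖ ≤ t ^ 2 := by
          rw [norm_smul]
          have : ‖(t : ℂ) ^ 2‖ = t ^ 2 := by
            rw [norm_pow, Complex.norm_real, Real.norm_eq_abs, _root_.sq_abs]
          rw [this]
          have hsx : ‖star x * x‖ ≤ 1 := by
            have h1' : ‖star x * x‖ ≤ ‖star x‖ * ‖x‖ := norm_mul_le _ _
            have h2' : ‖star x‖ * ‖x‖ ≤ 1 := by rw [norm_star]; nlinarith [norm_nonneg x]
            linarith
          calc t ^ 2 * ‖star x * x‖ ≤ t ^ 2 * 1 :=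
                mul_le_mul_of_nonneg_left hsx (sq_nonneg t)
            _ = t ^ 2 := mul_one _
        linarith
      rw [hCstar, hexp]
      exact hfinal
  · intro H ρ h1 hn
    have key : ∀ t : ℝ, 0 < t → t ≤ 1 → (ρ x).re ≤ t / 2 := by
      intro t ht0 ht1
      have hnorm := H t ⟨le_of_lt ht0, ht1⟩
      have hval : ρ (1 + (t : ℂ) • x) = 1 + (t : ℂ) * ρ x := by
        rw [map_add, map_smul, h1, smul_eq_mul]
      have habs : ‖ρ (1 + (t : ℂ) • x)‖ ≤ ‖1 + (t : ℂ) • x‖ := by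
        have := ρ.le_opNorm (1 + (t : ℂ) • x)
        rwa [hn, one_mul] at this
      have hsq : (1 + t * (ρ x).re) ^ 2 ≤ 1 + t ^ 2 := by
        have h1' : (1 + t * (ρ x).re) ^ 2 ≤ ‖(1 : ℂ) + (t : ℂ) * ρ x‖ ^ 2 := by
          have hre : ((1 : ℂ) + (t : ℂ) * ρ x).re = 1 + t * (ρ x).re := by
            simp [Complex.add_re, Complex.mul_re]
          calc (1 + t * (ρ x).re) ^ 2 = ((1 : ℂ) + (t : ℂ) * ρ x).re ^ 2 := by rw [hre]
            _ ≤ ((1 : ℂ) + (t : ℂ) * ρ x).re ^ 2 + ((1 : ℂ) + (t : ℂ) * ρ x).im ^ 2 := by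
                nlinarith [sq_nonneg ((1 : ℂ) + (t : ℂ) * ρ x).im]
            _ = ‖(1 : ℂ) + (t : ℂ) * ρ x‖ ^ 2 := by
                rw [Complex.sq_norm, Complex.normSq_apply]; ring
        have h2' : ‖(1 : ℂ) + (t : ℂ) * ρ x‖ ^ 2 ≤ ‖1 + (t : ℂ) • x‖ ^ 2 := by
          rw [← hval]
          exact pow_le_pow_left₀ (norm_nonneg _) habs 2
        linarith
      nlinarith [sq_nonneg (ρ x).re, sq_nonneg t]
    by_contra hpos
    push_neg at hpos
    set r := (ρ x).re with hr
    have hrt : r ≤ min 1 r / 2 := key (min 1 r) (lt_min one_pos hpos) (min_le_left _ _)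
    have : min 1 r ≤ r := min_le_right _ _
    have h1r : (0:ℝ) < min 1 r := lt_min one_pos hpos
    linarith [min_le_right 1 r]
end

section
/- Let X be a unital operator space and let D_X be its cone of dissipative elements. If ρ is a bounded linear functional on X such that Re ρ(x) ≤ 0 for all x ∈ D_X, then ρ(1) ≥ 0, ρ(1) ∈ ℝ, and |ρ(x)| ≤ ‖x‖·ρ(1) for all x ∈ X; in particular, ρ is a nonnegative multiple of a state. -/
/-- Let `X` be a unital operator space (a closed unital subspace of a
unital C*-algebra `A`) and let `D_X` be its cone of dissipative elements (those
`x ∈ X` with `Re σ(x) ≤ 0` for every state `σ` of `A`).  If `ρ` is a bounded linear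
functional on `X` such that `Re ρ(x) ≤ 0` for all `x ∈ D_X`, then `ρ(1) ≥ 0`,
`ρ(1) ∈ ℝ`, and `|ρ(x)| ≤ ‖x‖·ρ(1)` for all `x ∈ X`; in particular `ρ` is a
nonnegative multiple of a state. -/
theorem functional_nonneg_on_negDissipative_is_multiple_of_state
    {A : Type*} [NormedRing A] [StarRing A] [CStarRing A] [NormedAlgebra ℂ A]
    [StarModule ℂ A] [CompleteSpace A]
    (X : Submodule ℂ A) (hX1 : (1 : A) ∈ X) (hXc : IsClosed (X : Set A))
    (ρ : X →L[ℂ] ℂ)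
    (hρ : ∀ x : X, (∀ σ : A →L[ℂ] ℂ, σ 1 = 1 → ‖σ‖ = 1 → (σ (x : A)).re ≤ 0) →
      (ρ x).re ≤ 0) :
    (ρ ⟨1, hX1⟩).im = 0 ∧ 0 ≤ (ρ ⟨1, hX1⟩).re ∧
      (∀ x : X, ‖ρ x‖ ≤ ‖(x : A)‖ * (ρ ⟨1, hX1⟩).re) ∧
      (ρ = 0 ∨ ∃ φ : X →L[ℂ] ℂ, φ ⟨1, hX1⟩ = 1 ∧ ‖φ‖ = 1 ∧ ρ = (ρ ⟨1, hX1⟩) • φ) := by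
  set e : X := ⟨1, hX1⟩ with he
  have he1 : ((e : A)) = 1 := rfl
  have him : (ρ e).im = 0 := by
    have h1 : (ρ (Complex.I • e)).re ≤ 0 := by
      apply hρ
      intro σ hσ1 hσn
      simp [he1, hσ1]
    have h2 : (ρ ((-Complex.I) • e)).re ≤ 0 := by
      apply hρ
      intro σ hσ1 hσn
      simp [he1, hσ1]
    simp only [map_smul, smul_eq_mul, Complex.mul_re, Complex.I_re, Complex.I_im,
      neg_mul, Complex.neg_re, Complex.neg_im, zero_mul, one_mul, zero_sub, neg_neg,
      neg_zero, sub_zero, zero_add] at h1 h2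
    linarith
  have hre : 0 ≤ (ρ e).re := by
    have h1 : (ρ (-e)).re ≤ 0 := by
      apply hρ
      intro σ hσ1 hσn
      simp [he1, hσ1]
    simp only [map_neg, Complex.neg_re] at h1
    linarith
  have hbound : ∀ x : X, ‖ρ x‖ ≤ ‖(x : A)‖ * (ρ e).re := by
    intro x
    by_cases hc : ρ x = 0
    · simp only [hc, norm_zero]
      positivity
    · set c : ℂ := ρ x with hcdef
      set θ : ℂ := (starRingEnd ℂ) c / (‖c‖ : ℂ) with hθdef
      have hcn : ‖c‖ ≠ 0 := norm_ne_zero_iff.mpr hc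
      have hcn' : ((‖c‖ : ℝ) : ℂ) ≠ 0 := Complex.ofReal_ne_zero.mpr hcn
      have hθ : ‖θ‖ = 1 := by
        rw [hθdef, norm_div, RCLike.norm_conj]
        simp only [Complex.norm_real, Real.norm_eq_abs, abs_of_nonneg (norm_nonneg c)]
        exact div_self hcn
      have key : (ρ (θ • x - (‖(x : A)‖ : ℂ) • e)).re ≤ 0 := by
        apply hρ
        intro σ hσ1 hσn
        have hcoe : (((θ • x - (‖(x : A)‖ : ℂ) • e : X)) : A)
            = θ • (x : A) - (‖(x : A)‖ : ℂ) • (1 : A) := rfl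
        rw [hcoe, map_sub, map_smul, map_smul, hσ1, smul_eq_mul, smul_eq_mul, mul_one,
          Complex.sub_re, Complex.ofReal_re]
        have hle : ‖σ (x : A)‖ ≤ ‖(x : A)‖ := by
          calc ‖σ (x : A)‖ ≤ ‖σ‖ * ‖(x : A)‖ := σ.le_opNorm _
            _ = ‖(x : A)‖ := by rw [hσn, one_mul]
        have h2 : (θ * σ (x : A)).re ≤ ‖(x : A)‖ := by
          calc (θ * σ (x : A)).re ≤ ‖θ * σ (x : A)‖ := Complex.re_le_norm _
            _ = ‖θ * σ (x : A)‖ := rfl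
            _ = ‖θ‖ * ‖σ (x : A)‖ := norm_mul _ _
            _ = ‖σ (x : A)‖ := by rw [hθ, one_mul]
            _ ≤ ‖(x : A)‖ := hle
        linarith
      have hρy : ρ (θ • x - (‖(x : A)‖ : ℂ) • e) = (‖c‖ : ℂ) - (‖(x : A)‖ : ℂ) * ρ e := by
        rw [map_sub, map_smul, map_smul, ← hcdef, smul_eq_mul, smul_eq_mul]
        congr 1
        rw [hθdef, div_mul_eq_mul_div, Complex.conj_mul']
        rw [sq, mul_div_assoc, div_self hcn', mul_one]
      rw [hρy] at key
      simp only [Complex.sub_re, Complex.ofReal_re, Complex.mul_re, Complex.ofReal_im,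
        zero_mul, sub_zero] at key
      linarith
  refine ⟨him, hre, hbound, ?_⟩
  by_cases h0 : ρ = 0
  · exact Or.inl h0
  · right
    obtain ⟨x, hx⟩ : ∃ x, ρ x ≠ 0 := by
      by_contra h
      push_neg at h
      exact h0 (ContinuousLinearMap.ext fun y => by simpa using h y)
    have hxA : (x : A) ≠ 0 := by
      intro h
      apply hx
      have : x = 0 := Subtype.ext h
      simp [this]
    have : Nontrivial A := ⟨⟨(x : A), 0, hxA⟩⟩
    have hrpos : 0 < (ρ e).re := by
      have hb := hbound x
      have h1 : 0 < ‖ρ x‖ := norm_pos_iff.mpr hx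
      nlinarith [norm_nonneg (x : A)]
    have hρez : ρ e = ((ρ e).re : ℂ) := Complex.ext rfl (by simp [him])
    have hρen : ρ e ≠ 0 := by
      intro h
      rw [h] at hrpos
      simp at hrpos
    have hρeabs : ‖ρ e‖ = (ρ e).re := by
      rw [hρez]
      simp [abs_of_nonneg hre]
    have heA1 : ‖(e : A)‖ = 1 := by rw [he1]; exact norm_one
    have heX1 : ‖e‖ = 1 := heA1
    refine ⟨(ρ e)⁻¹ • ρ, ?_, ?_, ?_⟩
    · simp only [ContinuousLinearMap.smul_apply, smul_eq_mul, ← he]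
      exact inv_mul_cancel₀ hρen
    · have hle : ‖(ρ e)⁻¹ • ρ‖ ≤ 1 := by
        apply ContinuousLinearMap.opNorm_le_bound _ zero_le_one
        intro y
        rw [ContinuousLinearMap.smul_apply, norm_smul, norm_inv, hρeabs, one_mul]
        have hb := hbound y
        have hyn : ‖y‖ = ‖(y : A)‖ := rfl
        rw [hyn, inv_mul_le_iff₀ hrpos]
        linarith [hb]
      have hge : 1 ≤ ‖(ρ e)⁻¹ • ρ‖ := by
        have h1 := ((ρ e)⁻¹ • ρ).le_opNorm e
        rw [heX1, mul_one] at h1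
        have h2 : ((ρ e)⁻¹ • ρ) e = 1 := by
          simp only [ContinuousLinearMap.smul_apply, smul_eq_mul]
          exact inv_mul_cancel₀ hρen
        rw [h2, norm_one] at h1
        exact h1
      linarith
    · ext y
      simp only [ContinuousLinearMap.smul_apply, smul_eq_mul, ← he, smul_smul]
      rw [mul_inv_cancel₀ hρen, one_mul]
end
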